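/- Assume Dg1 + Dr2 > Dg2 + Dr1, Dr1 < Dr2, and Dg1 > Dg2. Set p* = (Dr2 - Dr1)/(Dg1 - Dg2 - Dr1 + Dr2). Then p* ∈ (0,1), and: for every p ∈ (0, p*) and every π1 ∈ [0,1), F(π1, p) > F(1, p); while for every p ∈ (p*, 1) and every π1 ∈ (0,1], F(π1, p) > F(0, p). -/

import Mathlib

/-- Distribution-dependent part of the fitness difference between defectors and
cooperators in the two-game variable game framework, with stationary game
distribution `(π1, 1-π1)` and cooperator fraction `p`. -/
noncomputable def Fdiff (Dg1 Dr1 Dg2 Dr2 π1 p : ℝ) : ℝ :=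
  (1 - p) * (π1 * Dr1 + (1 - π1) * Dr2) + p * (π1 * Dg1 + (1 - π1) * Dg2)

theorem min_fitness_diff_case1_iii (Dg1 Dr1 Dg2 Dr2 : ℝ)
    (hDg1 : Dg1 ∈ Set.Icc (-1 : ℝ) 1) (hDr1 : Dr1 ∈ Set.Icc (-1 : ℝ) 1)
    (hDg2 : Dg2 ∈ Set.Icc (-1 : ℝ) 1) (hDr2 : Dr2 ∈ Set.Icc (-1 : ℝ) 1)
    (hcase : Dg1 + Dr2 > Dg2 + Dr1) (hcond1 : Dr1 < Dr2) (hcond2 : Dg1 > Dg2)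
    (pstar : ℝ) (hpstar : pstar = (Dr2 - Dr1) / (Dg1 - Dg2 - Dr1 + Dr2)) :
    pstar ∈ Set.Ioo (0 : ℝ) 1 ∧
    (∀ p ∈ Set.Ioo (0 : ℝ) pstar, ∀ π1 ∈ Set.Ico (0 : ℝ) 1,
      Fdiff Dg1 Dr1 Dg2 Dr2 π1 p > Fdiff Dg1 Dr1 Dg2 Dr2 1 p) ∧
    (∀ p ∈ Set.Ioo pstar (1 : ℝ), ∀ π1 ∈ Set.Ioc (0 : ℝ) 1,
      Fdiff Dg1 Dr1 Dg2 Dr2 π1 p > Fdiff Dg1 Dr1 Dg2 Dr2 0 p) := by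
  have hD : Dg1 - Dg2 - Dr1 + Dr2 > 0 := by linarith
  have hnum : Dr2 - Dr1 > 0 := by linarith
  have hps : pstar * (Dg1 - Dg2 - Dr1 + Dr2) = Dr2 - Dr1 := by
    rw [hpstar]; field_simp
  refine ⟨⟨?_, ?_⟩, ?_, ?_⟩
  · rw [hpstar]; positivity
  · rw [hpstar, div_lt_one hD]; linarith
  · rintro p ⟨hp0, hp1⟩ π1 ⟨hπ0, hπ1⟩
    have hlt : p * (Dg1 - Dg2 - Dr1 + Dr2) < Dr2 - Dr1 := by
      rw [← hps]; exact (mul_lt_mul_iff_of_pos_right hD).mpr hp1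
    simp only [Fdiff]
    nlinarith [mul_pos (sub_pos.mpr hπ1) (by linarith : (Dr2 - Dr1) - p * (Dg1 - Dg2 - Dr1 + Dr2) > 0)]
  · rintro p ⟨hp0, hp1⟩ π1 ⟨hπ0, hπ1⟩
    have hlt : Dr2 - Dr1 < p * (Dg1 - Dg2 - Dr1 + Dr2) := by
      rw [← hps]; exact (mul_lt_mul_iff_of_pos_right hD).mpr hp0
    simp only [Fdiff]
    nlinarith [mul_pos hπ0 (by linarith : p * (Dg1 - Dg2 - Dr1 + Dr2) - (Dr2 - Dr1) > 0)]
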